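/- (Node-level upper bound.) Let c, q ∈ ℝ^d be nonzero vectors, let φ = θ(q, c) be the angle between q and c, and let ω ∈ [0, π]. Then for every vector u ∈ ℝ^d with ‖u‖ = 1 whose angle with c satisfies θ(u, c) ≤ ω, one has ⟨u, q⟩ ≤ ‖q‖ · cos(max(φ − ω, 0)). Consequently, for any finite set S of unit vectors all of whose angles with c are at most ω, max_{u ∈ S} ⟨u, q⟩ ≤ ‖q‖ · cos(max(φ − ω, 0)). -/
import Mathlib


open RealInnerProductSpace InnerProductGeometry

private lemma key_inner_le {V : Type*} [NormedAddCommGroup V] [InnerProductSpace ℝ V]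
    (u c q : V) (hu : ‖u‖ = 1) (hc : ‖c‖ = 1) :
    ⟪u, q⟫ ≤ ‖q‖ * Real.cos (angle q c - angle u c) := by
  set β := angle u c with hβ
  set φ := angle q c with hφ
  have hsinβ : 0 ≤ Real.sin β := Real.sin_nonneg_of_nonneg_of_le_pi (angle_nonneg _ _) (angle_le_pi _ _)
  have hsinφ : 0 ≤ Real.sin φ := Real.sin_nonneg_of_nonneg_of_le_pi (angle_nonneg _ _) (angle_le_pi _ _)
  have ha : ⟪u, c⟫ = Real.cos β := by
    have := cos_angle_mul_norm_mul_norm u c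
    rw [hu, hc] at this; linarith
  have hp : ⟪q, c⟫ = ‖q‖ * Real.cos φ := by
    have := cos_angle_mul_norm_mul_norm q c
    rw [hc] at this
    rw [← this]; ring
  have hcc : ⟪c, c⟫ = (1 : ℝ) := by
    rw [real_inner_self_eq_norm_sq, hc]; norm_num
  set u' := u - ⟪u, c⟫ • c with hu'
  set q' := q - ⟪q, c⟫ • c with hq'
  have hsplit : ⟪u, q⟫ = ⟪u, c⟫ * ⟪q, c⟫ + ⟪u', q'⟫ := by
    simp only [hu', hq', inner_sub_left, inner_sub_right, real_inner_smul_left,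
      real_inner_smul_right, hcc, real_inner_comm u c, real_inner_comm q c,
      real_inner_comm q u]
    ring
  have hnu' : ‖u'‖ = Real.sin β := by
    have h2 : ‖u'‖ ^ 2 = Real.sin β ^ 2 := by
      have := norm_sub_sq_real u (⟪u, c⟫ • c)
      rw [real_inner_smul_right, norm_smul, hc, hu] at this
      simp only [hu']
      rw [this, ha]
      have := Real.sin_sq_add_cos_sq β
      simp [abs_mul_abs_self]
      nlinarith [Real.sin_sq_add_cos_sq β]
    calc ‖u'‖ = Real.sqrt (‖u'‖ ^ 2) := (Real.sqrt_sq (norm_nonneg _)).symm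
      _ = Real.sqrt (Real.sin β ^ 2) := by rw [h2]
      _ = Real.sin β := Real.sqrt_sq hsinβ
  have hnq' : ‖q'‖ = ‖q‖ * Real.sin φ := by
    have h2 : ‖q'‖ ^ 2 = (‖q‖ * Real.sin φ) ^ 2 := by
      have := norm_sub_sq_real q (⟪q, c⟫ • c)
      rw [real_inner_smul_right, norm_smul, hc] at this
      simp only [hq']
      rw [this, hp, Real.norm_eq_abs, mul_one, sq_abs]
      nlinarith [Real.sin_sq_add_cos_sq φ]
    calc ‖q'‖ = Real.sqrt (‖q'‖ ^ 2) := (Real.sqrt_sq (norm_nonneg _)).symm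
      _ = Real.sqrt ((‖q‖ * Real.sin φ) ^ 2) := by rw [h2]
      _ = ‖q‖ * Real.sin φ := Real.sqrt_sq (mul_nonneg (norm_nonneg _) hsinφ)
  have hcs : ⟪u', q'⟫ ≤ ‖u'‖ * ‖q'‖ := real_inner_le_norm _ _
  have : ⟪u, q⟫ ≤ Real.cos β * (‖q‖ * Real.cos φ) + Real.sin β * (‖q‖ * Real.sin φ) := by
    rw [hsplit, ha, hp]
    rw [hnu', hnq'] at hcs
    linarith
  rw [Real.cos_sub]
  nlinarith [this]

/-- Node-level upper bound of SAH: for nonzero `c, q`, `φ = θ(q, c)`, and `ω ∈ [0, π]`,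
every unit vector `u` with `θ(u, c) ≤ ω` satisfies `⟪u, q⟫ ≤ ‖q‖ · cos(max(φ - ω, 0))`;
consequently, for any finite nonempty set of such unit vectors, the maximum inner product
with `q` is at most `‖q‖ · cos(max(φ - ω, 0))`. -/
theorem node_level_upper_bound {d : ℕ} (c q : EuclideanSpace ℝ (Fin d))
    (hc : c ≠ 0) (hq : q ≠ 0) (ω : ℝ) (hω₀ : 0 ≤ ω) (hωπ : ω ≤ Real.pi) :
    (∀ u : EuclideanSpace ℝ (Fin d), ‖u‖ = 1 → angle u c ≤ ω →
      ⟪u, q⟫ ≤ ‖q‖ * Real.cos (max (angle q c - ω) 0)) ∧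
    (∀ (S : Finset (EuclideanSpace ℝ (Fin d))) (hS : S.Nonempty),
      (∀ u ∈ S, ‖u‖ = 1 ∧ angle u c ≤ ω) →
      S.sup' hS (fun u => ⟪u, q⟫) ≤ ‖q‖ * Real.cos (max (angle q c - ω) 0)) := by
  have hfirst : ∀ u : EuclideanSpace ℝ (Fin d), ‖u‖ = 1 → angle u c ≤ ω →
      ⟪u, q⟫ ≤ ‖q‖ * Real.cos (max (angle q c - ω) 0) := by
    intro u hu hangle
    rcases le_or_gt ω (angle q c) with hcase | hcase
    · rw [max_eq_left (by linarith)]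
      have hkey := key_inner_le u (‖c‖⁻¹ • c) q hu (by
        rw [norm_smul, norm_inv, norm_norm, inv_mul_cancel₀ (norm_ne_zero_iff.2 hc)])
      have hpos : (0 : ℝ) < ‖c‖⁻¹ := inv_pos.2 (norm_pos_iff.2 hc)
      rw [angle_smul_right_of_pos q c hpos, angle_smul_right_of_pos u c hpos] at hkey
      refine hkey.trans (mul_le_mul_of_nonneg_left ?_ (norm_nonneg q))
      exact Real.cos_le_cos_of_nonneg_of_le_pi (by linarith)
        (by have := angle_nonneg u c; have := angle_le_pi q c; linarith)
        (by linarith)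
    · rw [max_eq_right (by linarith), Real.cos_zero, mul_one]
      calc ⟪u, q⟫ ≤ ‖u‖ * ‖q‖ := real_inner_le_norm _ _
        _ = ‖q‖ := by rw [hu, one_mul]
  refine ⟨hfirst, fun S hS hSmem => ?_⟩
  exact Finset.sup'_le hS _ fun u hu => hfirst u (hSmem u hu).1 (hSmem u hu).2
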